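/- Let T, U be closed subspaces of H with cos(φ_{T,U}) > 0, (u_j) a frame for U with frame operator S, and (t_k) a frame for T with synthesis operator T. Then T^⊥ ∩ S(T) = {0}, and hence H = T ⊕ S(T)^⊥. -/

import Mathlib

noncomputable section
open scoped InnerProductSpace ENNReal
open ComplexConjugate

/-- The sequence space ℓ²(ℕ). -/
abbrev Lp2 : Type := lp (fun _ : ℕ => ℂ) 2

/-- `u` is a frame for the subspace `U` with frame bounds `A` and `B`:
`A‖f‖² ≤ Σ_j |⟨f,u_j⟩|² ≤ B‖f‖²` for all `f ∈ U`, and all `u_j ∈ U`. -/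
def IsFrameFor {H : Type} [NormedAddCommGroup H] [InnerProductSpace ℂ H]
    (u : ℕ → H) (U : Submodule ℂ H) (A B : ℝ) : Prop :=
  (∀ j, u j ∈ U) ∧
    ∀ f ∈ U, A * ‖f‖ ^ 2 ≤ ∑' j, ‖⟪u j, f⟫_ℂ‖ ^ 2 ∧
      ∑' j, ‖⟪u j, f⟫_ℂ‖ ^ 2 ≤ B * ‖f‖ ^ 2

/-- `cos(φ_{T,U}) = inf_{g ∈ T, ‖g‖=1} ‖P_U g‖` (orthogonal-projection form). -/
def cosAngleP {H : Type} [NormedAddCommGroup H] [InnerProductSpace ℂ H]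
    [CompleteSpace H] (T U : Submodule ℂ H) [CompleteSpace U] : ℝ :=
  sInf {r : ℝ | ∃ g ∈ T, ‖g‖ = 1 ∧ r = ‖(U.orthogonalProjection g : H)‖}

/-- `cos(φ_{T,Y}) = inf_{g ∈ T, ‖g‖=1} sup_{v ∈ Y, ‖v‖=1} |⟨g,v⟩|` (inner-product form,
for a general subset `Y`). -/
def cosAngleS {H : Type} [NormedAddCommGroup H] [InnerProductSpace ℂ H]
    (T : Submodule ℂ H) (Y : Set H) : ℝ :=
  sInf {r : ℝ | ∃ g ∈ T, ‖g‖ = 1 ∧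
    r = sSup {s : ℝ | ∃ v ∈ Y, ‖v‖ = 1 ∧ s = ‖⟪g, v⟫_ℂ‖}}

/-- Auxiliary: the diagonal sum `⟪x, S x⟫` of the frame operator is the (real) sum of
`‖⟪u j, x⟫‖²`. -/
theorem hasSum_inner_S_aux {H : Type} [NormedAddCommGroup H] [InnerProductSpace ℂ H]
    (u : ℕ → H) (S : H →L[ℂ] H) (hS : ∀ f, HasSum (fun j => ⟪u j, f⟫_ℂ • u j) (S f))
    (x : H) : HasSum (fun j => (‖⟪u j, x⟫_ℂ‖ ^ 2 : ℝ)) (RCLike.re ⟪x, S x⟫_ℂ) := by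
  have h := (innerSL ℂ x).hasSum (hS x)
  have h2 : HasSum (fun j => ((‖⟪u j, x⟫_ℂ‖ ^ 2 : ℝ) : ℂ)) ⟪x, S x⟫_ℂ := by
    refine HasSum.congr_fun h fun j => ?_
    have h1 : ⟪x, ⟪u j, x⟫_ℂ • u j⟫_ℂ = ⟪u j, x⟫_ℂ * conj ⟪u j, x⟫_ℂ := by
      rw [inner_smul_right, inner_conj_symm]
    simp only [innerSL_apply_apply]
    rw [h1, RCLike.mul_conj]
    norm_cast
  have h3 := ((Complex.hasSum_iff _ _).mp h2).1
  simpa [← Complex.ofReal_pow] using h3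

/-- Auxiliary: the frame operator is symmetric. -/
theorem S_symm_aux {H : Type} [NormedAddCommGroup H] [InnerProductSpace ℂ H]
    (u : ℕ → H) (S : H →L[ℂ] H) (hS : ∀ f, HasSum (fun j => ⟪u j, f⟫_ℂ • u j) (S f))
    (x y : H) : ⟪S x, y⟫_ℂ = ⟪x, S y⟫_ℂ := by
  have hx := (innerSL ℂ y).hasSum (hS x)
  have hy := (innerSL ℂ x).hasSum (hS y)
  have hx' := hx.map (starRingEnd ℂ).toAddMonoidHom (RCLike.continuous_conj)
  simp only [innerSL_apply_apply, RingHom.toAddMonoidHom_eq_coe, AddMonoidHom.coe_coe,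
    Function.comp_def, inner_conj_symm] at hx' hy
  refine (hy.congr_fun fun j => ?_).unique hx' |>.symm
  simp [inner_smul_left, inner_smul_right, inner_conj_symm, mul_comm]

/-- Auxiliary: coercivity of the frame operator on `T` when the angle is positive. -/
theorem coercive_aux {H : Type} [NormedAddCommGroup H] [InnerProductSpace ℂ H]
    [CompleteSpace H] (T U : Submodule ℂ H) [CompleteSpace U]
    (hangle : 0 < cosAngleP T U)
    (u : ℕ → H) (A B : ℝ) (hA : 0 < A) (hframe : IsFrameFor u U A B)
    (S : H →L[ℂ] H) (hS : ∀ f, HasSum (fun j => ⟪u j, f⟫_ℂ • u j) (S f))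
    (x : H) (hx : x ∈ T) :
    A * cosAngleP T U ^ 2 * ‖x‖ ^ 2 ≤ RCLike.re ⟪x, S x⟫_ℂ := by
  have hsum := hasSum_inner_S_aux u S hS x
  rw [← hsum.tsum_eq]
  set c := cosAngleP T U with hc
  rcases eq_or_ne x 0 with rfl | hx0
  · simpa using tsum_nonneg (fun j => sq_nonneg (‖⟪u j, (0 : H)⟫_ℂ‖))
  -- the inner products only see the projection onto U
  have hPU : ∀ j, ⟪u j, x⟫_ℂ = ⟪u j, ((U.orthogonalProjection x : H))⟫_ℂ := by
    intro j
    have h1 := Submodule.sub_starProjection_mem_orthogonal (K := U) x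
    have h2 := (Submodule.mem_orthogonal U _).mp h1 (u j) (hframe.1 j)
    rw [inner_sub_right, sub_eq_zero] at h2
    exact h2
  -- the angle bound
  have hxn : (0:ℝ) < ‖x‖ := norm_pos_iff.mpr hx0
  have hc_le : c * ‖x‖ ≤ ‖(U.orthogonalProjection x : H)‖ := by
    have hg : c ≤ ‖x‖⁻¹ * ‖(U.orthogonalProjection x : H)‖ := by
      refine csInf_le ⟨0, ?_⟩ ?_
      · rintro r ⟨g, -, -, rfl⟩; exact norm_nonneg _
      · refine ⟨((‖x‖⁻¹ : ℝ) : ℂ) • x, T.smul_mem _ hx, ?_, ?_⟩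
        · simp [norm_smul, abs_of_pos (inv_pos.mpr hxn), inv_mul_cancel₀ hxn.ne']
        · rw [map_smul]
          push_cast
          simp [norm_smul, abs_of_pos (inv_pos.mpr hxn)]
      -- r = ‖P g‖
    calc c * ‖x‖ ≤ (‖x‖⁻¹ * ‖(U.orthogonalProjection x : H)‖) * ‖x‖ := by
          exact mul_le_mul_of_nonneg_right hg hxn.le
      _ = ‖(U.orthogonalProjection x : H)‖ := by field_simp
  have hPx : A * ‖(U.orthogonalProjection x : H)‖ ^ 2 ≤ ∑' j, ‖⟪u j, x⟫_ℂ‖ ^ 2 := by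
    have := (hframe.2 (U.orthogonalProjection x : H) (SetLike.coe_mem _)).1
    calc A * ‖(U.orthogonalProjection x : H)‖ ^ 2
        ≤ ∑' j, ‖⟪u j, ((U.orthogonalProjection x : H))⟫_ℂ‖ ^ 2 := this
      _ = ∑' j, ‖⟪u j, x⟫_ℂ‖ ^ 2 := by
          exact tsum_congr fun j => by rw [hPU j]
  have hsq : (c * ‖x‖) ^ 2 ≤ ‖(U.orthogonalProjection x : H)‖ ^ 2 := by
    have h0 : 0 ≤ c * ‖x‖ := mul_nonneg hangle.le (norm_nonneg _)
    exact pow_le_pow_left₀ h0 hc_le 2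
  calc A * c ^ 2 * ‖x‖ ^ 2 = A * (c * ‖x‖) ^ 2 := by ring
    _ ≤ A * ‖(U.orthogonalProjection x : H)‖ ^ 2 := by
        exact mul_le_mul_of_nonneg_left hsq hA.le
    _ ≤ ∑' j, ‖⟪u j, x⟫_ℂ‖ ^ 2 := hPx

/-- If `cos(φ_{T,U}) > 0`, then `T^⊥ ∩ S(T) = {0}` and hence
`H = T ⊕ S(T)^⊥` (a not-necessarily-orthogonal direct sum). -/
theorem direct_sum_T_STperp
    {H : Type} [NormedAddCommGroup H] [InnerProductSpace ℂ H] [CompleteSpace H]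
    (T U : Submodule ℂ H) [CompleteSpace T] [CompleteSpace U]
    (hangle : 0 < cosAngleP T U)
    (u : ℕ → H) (A B : ℝ) (hA : 0 < A) (hAB : A ≤ B) (hframe : IsFrameFor u U A B)
    (S : H →L[ℂ] H) (hS : ∀ f, HasSum (fun j => ⟪u j, f⟫_ℂ • u j) (S f))
    (t : ℕ → H) (C D : ℝ) (hC : 0 < C) (hCD : C ≤ D) (htframe : IsFrameFor t T C D)
    (Tsyn : Lp2 →L[ℂ] H) (hTsyn : ∀ k, Tsyn (lp.single 2 k 1) = t k) :
    (∀ g ∈ Tᗮ, g ∈ S '' (T : Set H) → g = 0) ∧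
      (∀ f : H, ∃! p : H × H,
        p.1 ∈ T ∧ (∀ v ∈ S '' (T : Set H), ⟪v, p.2⟫_ℂ = 0) ∧ f = p.1 + p.2) := by
  set c := cosAngleP T U with hcdef
  set α : ℝ := A * c ^ 2 with hαdef
  have hα : 0 < α := mul_pos hA (pow_pos hangle 2)
  have key : ∀ x ∈ T, α * ‖x‖ ^ 2 ≤ RCLike.re ⟪x, S x⟫_ℂ := fun x hx =>
    coercive_aux T U hangle u A B hA hframe S hS x hx
  -- vanishing of the quadratic form forces vanishing
  have zero_of : ∀ x ∈ T, ⟪x, S x⟫_ℂ = 0 → x = 0 := by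
    intro x hx h0
    have h1 := key x hx
    rw [h0] at h1
    simp only [map_zero] at h1
    have hx0 : ‖x‖ = 0 := by
      by_contra hne
      have hxn : (0:ℝ) < ‖x‖ := lt_of_le_of_ne (norm_nonneg x) (Ne.symm hne)
      have := mul_pos hα (pow_pos hxn 2)
      linarith
    exact norm_eq_zero.mp hx0
  constructor
  · rintro g hgT ⟨x, hxT, rfl⟩
    have h0 : ⟪x, S x⟫_ℂ = 0 := (Submodule.mem_orthogonal T _).mp hgT x hxT
    rw [zero_of x hxT h0, map_zero]
  · intro f
    -- the compressed operator R = P_T ∘ S ∘ ι on T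
    set R : T →L[ℂ] T := T.orthogonalProjection.comp (S.comp T.subtypeL) with hRdef
    have hRapply : ∀ z : T, R z = T.orthogonalProjection (S (z : H)) := fun z => rfl
    -- for z ∈ T, ⟪z, R z⟫ agrees with ⟪z, S z⟫
    have hinner_R : ∀ (y z : T), ⟪(y : H), ((R z : T) : H)⟫_ℂ = ⟪(y : H), S (z : H)⟫_ℂ := by
      intro y z
      have h1 := Submodule.sub_starProjection_mem_orthogonal (K := T) (S (z : H))
      have h2 := (Submodule.mem_orthogonal T _).mp h1 (y : H) y.2
      rw [inner_sub_right, sub_eq_zero] at h2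
      exact h2.symm
    have keyR : ∀ z : T, α * ‖z‖ ^ 2 ≤ RCLike.re ⟪z, R z⟫_ℂ := by
      intro z
      have := key (z : H) z.2
      rw [Submodule.coe_inner, hinner_R z z]
      simpa using this
    -- R is bounded below
    have hbound : ∀ z : T, ‖z‖ ≤ α⁻¹ * ‖R z‖ := by
      intro z
      have h1 := keyR z
      have h2 : RCLike.re ⟪z, R z⟫_ℂ ≤ ‖z‖ * ‖R z‖ := by
        calc RCLike.re ⟪z, R z⟫_ℂ ≤ ‖⟪z, R z⟫_ℂ‖ := RCLike.re_le_norm _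
          _ ≤ ‖z‖ * ‖R z‖ := norm_inner_le_norm _ _
      rcases eq_or_ne z 0 with rfl | hz0
      · simp
      · have hzn : (0:ℝ) < ‖z‖ := norm_pos_iff.mpr hz0
        have h3 : α * ‖z‖ ≤ ‖R z‖ := by
          have := le_trans h1 h2
          nlinarith
        have h4 := mul_le_mul_of_nonneg_left h3 (inv_nonneg.mpr hα.le)
        rw [← mul_assoc, inv_mul_cancel₀ hα.ne', one_mul] at h4
        exact h4
    have hanti : AntilipschitzWith (Real.toNNReal α⁻¹) R := by
      refine ContinuousLinearMap.antilipschitz_of_bound R fun z => ?_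
      rw [Real.coe_toNNReal _ (inv_nonneg.mpr hα.le)]
      exact hbound z
    -- R has closed range
    have hclosed : IsClosed (Set.range R) := hanti.isClosed_range R.uniformContinuous
    have hclosed' : IsClosed ((LinearMap.range (R : T →ₗ[ℂ] T) : Submodule ℂ T) : Set T) := by
      have : ((LinearMap.range (R : T →ₗ[ℂ] T) : Submodule ℂ T) : Set T) = Set.range R := by
        ext z; simp [LinearMap.mem_range]
      rw [this]; exact hclosed
    haveI : CompleteSpace (LinearMap.range (R : T →ₗ[ℂ] T) : Submodule ℂ T) :=
      hclosed'.completeSpace_coe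
    -- R has dense range, hence is surjective
    have hsurj : Function.Surjective R := by
      have horth : (LinearMap.range (R : T →ₗ[ℂ] T) : Submodule ℂ T)ᗮ = ⊥ := by
        rw [Submodule.eq_bot_iff]
        intro z hz
        have h0 : ⟪(R z : T), z⟫_ℂ = 0 :=
          (Submodule.mem_orthogonal _ _).mp hz (R z) (LinearMap.mem_range_self _ z)
        have h0' : ⟪z, R z⟫_ℂ = 0 := by
          rw [← inner_conj_symm, h0, map_zero]
        have h1 := keyR z
        rw [h0'] at h1
        simp only [map_zero] at h1
        have hz0 : ‖z‖ = 0 := by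
          by_contra hne
          have hzn : (0:ℝ) < ‖z‖ := lt_of_le_of_ne (norm_nonneg z) (Ne.symm hne)
          have := mul_pos hα (pow_pos hzn 2)
          linarith
        exact norm_eq_zero.mp hz0
      have htop : (LinearMap.range (R : T →ₗ[ℂ] T) : Submodule ℂ T) = ⊤ :=
        Submodule.orthogonal_eq_bot_iff.mp horth
      exact LinearMap.range_eq_top.mp htop
    obtain ⟨w, hw⟩ := hsurj (T.orthogonalProjection (S f))
    -- candidate decomposition
    refine ⟨⟨(w : H), f - (w : H)⟩, ⟨w.2, ?_, by simp⟩, ?_⟩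
    · rintro v ⟨y, hyT, rfl⟩
      have hSy : ⟪S y, f - (w : H)⟫_ℂ = ⟪y, S f⟫_ℂ - ⟪y, S (w : H)⟫_ℂ := by
        rw [S_symm_aux u S hS, map_sub, inner_sub_right]
      rw [hSy]
      have h1 : ⟪y, S f⟫_ℂ = ⟪y, ((T.orthogonalProjection (S f) : T) : H)⟫_ℂ := by
        have hsub := Submodule.sub_starProjection_mem_orthogonal (K := T) (S f)
        have h2 := (Submodule.mem_orthogonal T _).mp hsub y hyT
        rw [inner_sub_right, sub_eq_zero] at h2
        exact h2
      have h2 : ⟪y, S (w : H)⟫_ℂ = ⟪y, ((T.orthogonalProjection (S (w : H)) : T) : H)⟫_ℂ := by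
        have hsub := Submodule.sub_starProjection_mem_orthogonal (K := T) (S (w : H))
        have h3 := (Submodule.mem_orthogonal T _).mp hsub y hyT
        rw [inner_sub_right, sub_eq_zero] at h3
        exact h3
      rw [h1, h2]
      have : (T.orthogonalProjection (S (w : H)) : T) = T.orthogonalProjection (S f) := by
        rw [← hRapply w, hw]
      rw [this, sub_self]
    · rintro ⟨q1, q2⟩ ⟨hq1, hq2, hq3⟩
      simp only at hq1 hq2 hq3 ⊢
      -- difference lies in T and is orthogonal to S of itself
      have hd : q1 - (w : H) ∈ T := T.sub_mem hq1 w.2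
      have hmem : S (q1 - (w : H)) ∈ S '' (T : Set H) := ⟨_, hd, rfl⟩
      have e1 : ⟪S (q1 - (w : H)), q2⟫_ℂ = 0 := hq2 _ hmem
      have e2 : ⟪S (q1 - (w : H)), f - (w : H)⟫_ℂ = 0 := by
        -- the first decomposition is also orthogonal to S(T); reprove it
        have hSy : ⟪S (q1 - (w : H)), f - (w : H)⟫_ℂ
            = ⟪q1 - (w : H), S f⟫_ℂ - ⟪q1 - (w : H), S (w : H)⟫_ℂ := by
          rw [S_symm_aux u S hS, map_sub, inner_sub_right]
        
        rw [hSy]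
        have h1 : ⟪q1 - (w : H), S f⟫_ℂ
            = ⟪q1 - (w : H), ((T.orthogonalProjection (S f) : T) : H)⟫_ℂ := by
          have hsub := Submodule.sub_starProjection_mem_orthogonal (K := T) (S f)
          have h2 := (Submodule.mem_orthogonal T _).mp hsub _ hd
          rw [inner_sub_right, sub_eq_zero] at h2
          exact h2
        have h2 : ⟪q1 - (w : H), S (w : H)⟫_ℂ
            = ⟪q1 - (w : H), ((T.orthogonalProjection (S (w : H)) : T) : H)⟫_ℂ := by
          have hsub := Submodule.sub_starProjection_mem_orthogonal (K := T) (S (w : H))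
          have h3 := (Submodule.mem_orthogonal T _).mp hsub _ hd
          rw [inner_sub_right, sub_eq_zero] at h3
          exact h3
        rw [h1, h2]
        have : (T.orthogonalProjection (S (w : H)) : T) = T.orthogonalProjection (S f) := by
          rw [← hRapply w, hw]
        rw [this, sub_self]
      -- q2 = f - q1
      have hq2eq : q2 = f - q1 := by rw [hq3]; abel
      have e3 : ⟪S (q1 - (w : H)), q1 - (w : H)⟫_ℂ = 0 := by
        have heq : q1 - (w : H) = (f - (w : H)) - q2 := by rw [hq2eq]; abel
        calc ⟪S (q1 - (w : H)), q1 - (w : H)⟫_ℂ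
            = ⟪S (q1 - (w : H)), (f - (w : H)) - q2⟫_ℂ := by rw [← heq]
          _ = ⟪S (q1 - (w : H)), f - (w : H)⟫_ℂ - ⟪S (q1 - (w : H)), q2⟫_ℂ :=
              inner_sub_right _ _ _
          _ = 0 := by rw [e1, e2, sub_zero]
      have e4 : ⟪q1 - (w : H), S (q1 - (w : H))⟫_ℂ = 0 := by
        rw [← S_symm_aux u S hS, e3]
      have : q1 - (w : H) = 0 := zero_of _ hd e4
      have hq1w : q1 = (w : H) := by rwa [sub_eq_zero] at this
      refine Prod.ext ?_ ?_ <;> simp [hq1w, hq2eq]
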